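/- Closed form for the diagonal of NLRC: for every integer m ≥ p+1 and every index 1 ≤ i ≤ m−p, NLRC_{p,m}(i,i) = Σ_{k=0}^{min(m−p−i, p)} φ_k², where φ₀ := −1. -/
import Mathlib

open Matrix Finset

section Stmt10Aux

/-- The unit-lower-triangular "whitening" matrix. -/
noncomputable def Tmat (p : ℕ) (φ : ℕ → ℝ) (m : ℕ) : Matrix (Fin m) (Fin m) ℝ :=
  fun c a => if (c:ℕ) < p then (if c = a then 1 else 0)
    else if (a:ℕ) ≤ (c:ℕ) ∧ (c:ℕ) ≤ (a:ℕ) + p then -φ ((c:ℕ) - (a:ℕ)) else 0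

/-- The block-diagonal matrix `diag(Γ_p, σ² I)`. -/
noncomputable def Dmat (p : ℕ) (σ2 : ℝ) (γ : ℤ → ℝ) (m : ℕ) : Matrix (Fin m) (Fin m) ℝ :=
  fun c d => if (c:ℕ) < p ∧ (d:ℕ) < p then γ (|(c:ℤ) - (d:ℤ)|) else if c = d then σ2 else 0

/-- The inverse of `Dmat`. -/
noncomputable def Emat (p : ℕ) (σ2 : ℝ) (G : Matrix (Fin p) (Fin p) ℝ) (m : ℕ) :
    Matrix (Fin m) (Fin m) ℝ :=
  fun c d => if h : (c:ℕ) < p ∧ (d:ℕ) < p then G⁻¹ ⟨c, h.1⟩ ⟨d, h.2⟩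
    else if c = d then σ2⁻¹ else 0

variable {p : ℕ} {φ : ℕ → ℝ} {σ2 : ℝ} {γ : ℤ → ℝ}

lemma gabs (hsym : ∀ j : ℤ, γ (-j) = γ j) (x : ℤ) : γ |x| = γ x := by
  rcases abs_choice x with h | h
  · rw [h]
  · rw [h, hsym]

lemma range_succ_eq_insert_Icc (p : ℕ) : Finset.range (p+1) = insert 0 (Finset.Icc 1 p) := by
  ext k; simp only [Finset.mem_range, Finset.mem_insert, Finset.mem_Icc]; omega

lemma Ssum_pos (hφ0 : φ 0 = -1)
    (hYW : ∀ j : ℤ, 1 ≤ j → γ j = ∑ i ∈ Finset.Icc 1 p, φ i * γ (j - (i : ℤ)))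
    (z : ℤ) (hz : 1 ≤ z) :
    ∑ k ∈ Finset.range (p+1), φ k * γ (z - (k:ℤ)) = 0 := by
  rw [range_succ_eq_insert_Icc, Finset.sum_insert (by simp)]
  have := hYW z hz
  push_cast
  rw [hφ0]
  simp only [sub_zero]
  linarith [this]

lemma Ssum_zero (hφ0 : φ 0 = -1) (hsym : ∀ j : ℤ, γ (-j) = γ j)
    (hYW0 : γ 0 = (∑ i ∈ Finset.Icc 1 p, φ i * γ (i : ℤ)) + σ2) :
    ∑ k ∈ Finset.range (p+1), φ k * γ ((0:ℤ) - (k:ℤ)) = -σ2 := by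
  rw [range_succ_eq_insert_Icc, Finset.sum_insert (by simp)]
  have h2 : ∑ i ∈ Finset.Icc 1 p, φ i * γ ((0:ℤ) - (i:ℤ))
      = ∑ i ∈ Finset.Icc 1 p, φ i * γ (i:ℤ) := by
    apply Finset.sum_congr rfl
    intro i _
    rw [show (0:ℤ) - (i:ℤ) = -(i:ℤ) by ring, hsym]
  rw [h2, hφ0]
  have : ((0:ℕ):ℤ) = 0 := by norm_num
  rw [this, sub_zero]
  linarith [hYW0]

lemma shift_sum (p c m : ℕ) (hc : p ≤ c) (hcm : c < m) (F : ℕ → ℝ) :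
    ∑ a ∈ Finset.range m, (if a ≤ c ∧ c ≤ a + p then F a else 0)
      = ∑ k ∈ Finset.range (p+1), F (c - k) := by
  rw [← Finset.sum_filter]
  refine Finset.sum_nbij' (fun a => c - a) (fun k => c - k) ?_ ?_ ?_ ?_ ?_
  · intro a ha
    simp only [Finset.mem_filter, Finset.mem_range] at ha ⊢
    omega
  · intro k hk
    simp only [Finset.mem_filter, Finset.mem_range] at hk ⊢
    omega
  · intro a ha
    simp only [Finset.mem_filter, Finset.mem_range] at ha
    (try dsimp only); omega
  · intro k hk
    simp only [Finset.mem_range] at hk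
    (try dsimp only); omega
  · intro a ha
    simp only [Finset.mem_filter, Finset.mem_range] at ha
    congr 1
    (try dsimp only); omega

lemma shift_sum2 (p a m : ℕ) (ham : a < m) (F : ℕ → ℝ) :
    ∑ c ∈ Finset.range m, (if a ≤ c ∧ c ≤ a + p then F (c - a) else 0)
      = ∑ k ∈ Finset.range (min (m - 1 - a) p + 1), F k := by
  rw [← Finset.sum_filter]
  refine Finset.sum_nbij' (fun c => c - a) (fun k => a + k) ?_ ?_ ?_ ?_ ?_
  · intro c hc; simp only [Finset.mem_filter, Finset.mem_range] at hc ⊢; (try dsimp only); omega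
  · intro k hk; simp only [Finset.mem_filter, Finset.mem_range] at hk ⊢; (try dsimp only); omega
  · intro c hc; simp only [Finset.mem_filter, Finset.mem_range] at hc; (try dsimp only); omega
  · intro k hk; simp only [Finset.mem_range] at hk; (try dsimp only); omega
  · intro c hc; dsimp only

lemma sum_fin_lt (m p : ℕ) (hpm : p ≤ m) (f : Fin m → ℝ)
    (hf : ∀ c : Fin m, p ≤ (c:ℕ) → f c = 0) :
    ∑ c : Fin m, f c = ∑ c : Fin p, f (Fin.castLE hpm c) := by
  have h1 : ∑ c : Fin m, f c = ∑ n ∈ Finset.range m, (if h : n < m then f ⟨n, h⟩ else 0) := by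
    rw [← Fin.sum_univ_eq_sum_range]
    apply Finset.sum_congr rfl
    intro c _
    simp [c.isLt]
  have h2 : ∑ c : Fin p, f (Fin.castLE hpm c)
      = ∑ n ∈ Finset.range p, (if h : n < m then f ⟨n, h⟩ else 0) := by
    rw [← Fin.sum_univ_eq_sum_range]
    apply Finset.sum_congr rfl
    intro c _
    have : (c:ℕ) < m := lt_of_lt_of_le c.isLt hpm
    simp only [this, dif_pos]
    rfl
  rw [h1, h2]
  symm
  apply Finset.sum_subset (Finset.range_subset_range.mpr hpm)
  intro n hn hn2
  simp only [Finset.mem_range] at hn hn2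
  rw [dif_pos hn]
  exact hf ⟨n, hn⟩ (le_of_not_gt hn2)

lemma TA_entry (hsym : ∀ j : ℤ, γ (-j) = γ j) (m : ℕ)
    (A : Matrix (Fin m) (Fin m) ℝ) (hA : ∀ i j : Fin m, A i j = γ |(i : ℤ) - (j : ℤ)|)
    (c j : Fin m) (hc : p ≤ (c:ℕ)) :
    (Tmat p φ m * A) c j = -∑ k ∈ Finset.range (p+1), φ k * γ ((c:ℤ) - (j:ℤ) - (k:ℤ)) := by
  rw [Matrix.mul_apply]
  have hterm : ∀ a : Fin m, Tmat p φ m c a * A a j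
      = (fun n : ℕ => if n ≤ (c:ℕ) ∧ (c:ℕ) ≤ n + p
          then -φ ((c:ℕ) - n) * γ ((n:ℤ) - (j:ℤ)) else 0) (a:ℕ) := by
    intro a
    rw [hA, gabs hsym]
    have hcp : ¬ (c:ℕ) < p := not_lt.mpr hc
    simp only [Tmat, hcp, if_false]
    by_cases h : (a:ℕ) ≤ (c:ℕ) ∧ (c:ℕ) ≤ (a:ℕ) + p
    · rw [if_pos h, if_pos h]
    · rw [if_neg h, if_neg h, zero_mul]
  rw [Finset.sum_congr rfl (fun a _ => hterm a),
    Fin.sum_univ_eq_sum_range (fun n : ℕ => if n ≤ (c:ℕ) ∧ (c:ℕ) ≤ n + p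
      then -φ ((c:ℕ) - n) * γ ((n:ℤ) - (j:ℤ)) else 0) m,
    shift_sum p (c:ℕ) m hc c.isLt]
  rw [← Finset.sum_neg_distrib]
  apply Finset.sum_congr rfl
  intro k hk
  simp only [Finset.mem_range] at hk
  have hkc : k ≤ (c:ℕ) := by omega
  have h2 : (c:ℕ) - ((c:ℕ) - k) = k := by omega
  have h3 : (((c:ℕ) - k : ℕ) : ℤ) = (c:ℤ) - (k:ℤ) := by omega
  have h4 : (c:ℤ) - (k:ℤ) - (j:ℤ) = ((c:ℕ):ℤ) - ((j:ℕ):ℤ) - (k:ℤ) := by push_cast; ring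
  rw [h2, h3, h4]
  ring

lemma TA_lt (hφ0 : φ 0 = -1) (hsym : ∀ j : ℤ, γ (-j) = γ j)
    (hYW : ∀ j : ℤ, 1 ≤ j → γ j = ∑ i ∈ Finset.Icc 1 p, φ i * γ (j - (i : ℤ)))
    (m : ℕ) (A : Matrix (Fin m) (Fin m) ℝ)
    (hA : ∀ i j : Fin m, A i j = γ |(i : ℤ) - (j : ℤ)|)
    (c j : Fin m) (hc : p ≤ (c:ℕ)) (hj : (j:ℕ) < (c:ℕ)) :
    (Tmat p φ m * A) c j = 0 := by
  rw [TA_entry hsym m A hA c j hc, Ssum_pos hφ0 hYW ((c:ℤ) - (j:ℤ)) (by omega), neg_zero]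

lemma TA_diag (hφ0 : φ 0 = -1) (hsym : ∀ j : ℤ, γ (-j) = γ j)
    (hYW0 : γ 0 = (∑ i ∈ Finset.Icc 1 p, φ i * γ (i : ℤ)) + σ2)
    (m : ℕ) (A : Matrix (Fin m) (Fin m) ℝ)
    (hA : ∀ i j : Fin m, A i j = γ |(i : ℤ) - (j : ℤ)|)
    (c : Fin m) (hc : p ≤ (c:ℕ)) :
    (Tmat p φ m * A) c c = σ2 := by
  rw [TA_entry hsym m A hA c c hc]
  have h0 : ∀ k ∈ Finset.range (p+1), φ k * γ ((c:ℤ) - (c:ℤ) - (k:ℤ)) = φ k * γ ((0:ℤ) - (k:ℤ)) := by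
    intro k _
    congr 2
    omega
  rw [Finset.sum_congr rfl h0, Ssum_zero hφ0 hsym hYW0, neg_neg]

lemma TA_id (m : ℕ) (A : Matrix (Fin m) (Fin m) ℝ)
    (c j : Fin m) (hc : (c:ℕ) < p) :
    (Tmat p φ m * A) c j = A c j := by
  rw [Matrix.mul_apply]
  have : ∀ a : Fin m, Tmat p φ m c a * A a j = if c = a then A a j else 0 := by
    intro a
    simp only [Tmat, hc, if_true, if_pos hc]
    by_cases h : c = a
    · rw [if_pos h, if_pos h, one_mul]
    · rw [if_neg h, if_neg h, zero_mul]
  rw [Finset.sum_congr rfl (fun a _ => this a), Finset.sum_ite_eq]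
  simp

lemma Tmat_top {m : ℕ} (d j : Fin m) (hd : (d:ℕ) < p) :
    Tmat p φ m d j = if d = j then 1 else 0 := by
  simp only [Tmat, hd, if_true]

lemma Tmat_bot {m : ℕ} (d j : Fin m) (hd : p ≤ (d:ℕ)) :
    Tmat p φ m d j = if (j:ℕ) ≤ (d:ℕ) ∧ (d:ℕ) ≤ (j:ℕ) + p then -φ ((d:ℕ) - (j:ℕ)) else 0 := by
  have hdp : ¬ (d:ℕ) < p := not_lt.mpr hd
  simp only [Tmat, hdp, if_false]

lemma TAT (hφ0 : φ 0 = -1) (hsym : ∀ j : ℤ, γ (-j) = γ j)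
    (hYW0 : γ 0 = (∑ i ∈ Finset.Icc 1 p, φ i * γ (i : ℤ)) + σ2)
    (hYW : ∀ j : ℤ, 1 ≤ j → γ j = ∑ i ∈ Finset.Icc 1 p, φ i * γ (j - (i : ℤ)))
    (m : ℕ) (A : Matrix (Fin m) (Fin m) ℝ)
    (hA : ∀ i j : Fin m, A i j = γ |(i : ℤ) - (j : ℤ)|) :
    Tmat p φ m * A * (Tmat p φ m)ᵀ = Dmat p σ2 γ m := by
  have hAT : Aᵀ = A := by
    ext i j
    rw [Matrix.transpose_apply, hA, hA, abs_sub_comm]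
  have hBsym : ∀ c d : Fin m, (Tmat p φ m * A * (Tmat p φ m)ᵀ) d c
      = (Tmat p φ m * A * (Tmat p φ m)ᵀ) c d := by
    intro c d
    have hT : (Tmat p φ m * A * (Tmat p φ m)ᵀ)ᵀ = Tmat p φ m * A * (Tmat p φ m)ᵀ := by
      rw [Matrix.transpose_mul, Matrix.transpose_mul, Matrix.transpose_transpose, hAT,
        Matrix.mul_assoc]
    conv_lhs => rw [← hT]
    rw [Matrix.transpose_apply]
  -- column inside the corner block
  have hcol : ∀ c d : Fin m, (d:ℕ) < p →
      (Tmat p φ m * A * (Tmat p φ m)ᵀ) c d = (Tmat p φ m * A) c d := by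
    intro c d hd
    rw [Matrix.mul_apply]
    have hterm : ∀ j : Fin m, (Tmat p φ m * A) c j * (Tmat p φ m)ᵀ j d
        = if d = j then (Tmat p φ m * A) c j else 0 := by
      intro j
      rw [Matrix.transpose_apply, Tmat_top d j hd, mul_ite, mul_one, mul_zero]
    rw [Finset.sum_congr rfl (fun j _ => hterm j), Finset.sum_ite_eq, if_pos (Finset.mem_univ d)]
  -- lower-right case with d ≤ c
  have hmain : ∀ c d : Fin m, p ≤ (c:ℕ) → p ≤ (d:ℕ) → (d:ℕ) ≤ (c:ℕ) →
      (Tmat p φ m * A * (Tmat p φ m)ᵀ) c d = if c = d then σ2 else 0 := by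
    intro c d hc hd hdc
    rw [Matrix.mul_apply]
    have hterm : ∀ j : Fin m, (Tmat p φ m * A) c j * (Tmat p φ m)ᵀ j d
        = if j = c then (if c = d then σ2 else 0) else 0 := by
      intro j
      rw [Matrix.transpose_apply, Tmat_bot d j hd]
      rcases lt_trichotomy (j:ℕ) (c:ℕ) with h | h | h
      · rw [TA_lt hφ0 hsym hYW m A hA c j hc h, zero_mul,
          if_neg (show ¬ j = c from fun hjc => by rw [hjc] at h; omega)]
      · have hjc : j = c := Fin.ext h
        rw [if_pos hjc, hjc, TA_diag hφ0 hsym hYW0 m A hA c hc]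
        by_cases hcd : c = d
        · have hval : (c:ℕ) = (d:ℕ) := by rw [hcd]
          rw [if_pos hcd, if_pos (by omega), show (d:ℕ) - (c:ℕ) = 0 by omega, hφ0]
          norm_num
        · have hval : (d:ℕ) < (c:ℕ) := by
            rcases lt_or_eq_of_le hdc with hh | hh
            · exact hh
            · exact absurd (Fin.ext hh.symm) hcd
          rw [if_neg hcd, if_neg (show ¬((c:ℕ) ≤ (d:ℕ) ∧ (d:ℕ) ≤ (c:ℕ) + p) from by omega),
            mul_zero]
      · rw [if_neg (show ¬((j:ℕ) ≤ (d:ℕ) ∧ (d:ℕ) ≤ (j:ℕ) + p) from by omega), mul_zero,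
          if_neg (show ¬ j = c from fun hjc => by rw [hjc] at h; omega)]
    rw [Finset.sum_congr rfl (fun j _ => hterm j), Finset.sum_ite_eq', if_pos (Finset.mem_univ c)]
  ext c d
  by_cases hc : (c:ℕ) < p <;> by_cases hd : (d:ℕ) < p
  · rw [hcol c d hd, TA_id m A c d hc, hA]
    simp only [Dmat]
    rw [if_pos ⟨hc, hd⟩]
  · have hne : c ≠ d := fun hh => by rw [hh] at hc; exact hd hc
    rw [hBsym, hcol d c hc, TA_lt hφ0 hsym hYW m A hA d c (not_lt.mp hd) (lt_of_lt_of_le hc (not_lt.mp hd))]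
    simp only [Dmat]
    rw [if_neg (show ¬((c:ℕ) < p ∧ (d:ℕ) < p) from fun hh => hd hh.2), if_neg hne]
  · have hne : c ≠ d := fun hh => by rw [hh] at hc; exact hc hd
    rw [hcol c d hd, TA_lt hφ0 hsym hYW m A hA c d (not_lt.mp hc) (lt_of_lt_of_le hd (not_lt.mp hc))]
    simp only [Dmat]
    rw [if_neg (show ¬((c:ℕ) < p ∧ (d:ℕ) < p) from fun hh => hc hh.1), if_neg hne]
  · rcases le_or_gt (d:ℕ) (c:ℕ) with h | h
    · rw [hmain c d (not_lt.mp hc) (not_lt.mp hd) h]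
      simp only [Dmat]
      rw [if_neg (show ¬((c:ℕ) < p ∧ (d:ℕ) < p) from fun hh => hc hh.1)]
    · have hne : c ≠ d := fun hh => by rw [hh] at h; omega
      have hne' : d ≠ c := fun hh => hne hh.symm
      rw [hBsym, hmain d c (not_lt.mp hd) (not_lt.mp hc) (le_of_lt h), if_neg hne']
      simp only [Dmat]
      rw [if_neg (show ¬((c:ℕ) < p ∧ (d:ℕ) < p) from fun hh => hc hh.1), if_neg hne]

lemma DE_one (hσ : σ2 ≠ 0) {m : ℕ} (hpm : p ≤ m) (G : Matrix (Fin p) (Fin p) ℝ)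
    (hGinv : G * G⁻¹ = 1)
    (hG : ∀ i j : Fin p, G i j = γ |(i : ℤ) - (j : ℤ)|) :
    Dmat p σ2 γ m * Emat p σ2 G m = 1 := by
  ext c d
  rw [Matrix.mul_apply]
  by_cases hc : (c:ℕ) < p
  · by_cases hd : (d:ℕ) < p
    · have hf : ∀ e : Fin m, p ≤ (e:ℕ) →
          Dmat p σ2 γ m c e * Emat p σ2 G m e d = 0 := by
        intro e he
        have h1 : Dmat p σ2 γ m c e = 0 := by
          simp only [Dmat]
          rw [if_neg (show ¬((c:ℕ) < p ∧ (e:ℕ) < p) from fun hh => by omega),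
            if_neg (show ¬ c = e from fun hh => by rw [hh] at hc; omega)]
        rw [h1, zero_mul]
      rw [sum_fin_lt m p hpm _ hf]
      have hterm : ∀ e : Fin p,
          Dmat p σ2 γ m c (Fin.castLE hpm e) * Emat p σ2 G m (Fin.castLE hpm e) d
          = G ⟨c, hc⟩ e * G⁻¹ e ⟨d, hd⟩ := by
        intro e
        have he : ((Fin.castLE hpm e : Fin m) : ℕ) < p := e.isLt
        have hee : (⟨((Fin.castLE hpm e : Fin m) : ℕ), he⟩ : Fin p) = e := Fin.ext rfl
        simp only [Dmat, Emat]
        rw [if_pos ⟨hc, he⟩, dif_pos (⟨he, hd⟩ : _ ∧ _), hee, hG]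
        rfl
      rw [Finset.sum_congr rfl (fun e _ => hterm e), ← Matrix.mul_apply, hGinv]
      by_cases hcd : (c:ℕ) = (d:ℕ)
      · have h1 : (⟨(c:ℕ), hc⟩ : Fin p) = ⟨(d:ℕ), hd⟩ := Fin.ext hcd
        have h2 : c = d := Fin.ext hcd
        rw [h1, h2, Matrix.one_apply_eq, Matrix.one_apply_eq]
      · rw [Matrix.one_apply_ne (show (⟨(c:ℕ), hc⟩ : Fin p) ≠ ⟨(d:ℕ), hd⟩ from
            fun hh => hcd (congrArg Fin.val hh : ((⟨(c:ℕ), hc⟩ : Fin p):ℕ) = ((⟨(d:ℕ), hd⟩ : Fin p):ℕ))),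
          Matrix.one_apply_ne (show c ≠ d from fun hh => hcd (congrArg Fin.val hh))]
    · have hterm : ∀ e : Fin m, Dmat p σ2 γ m c e * Emat p σ2 G m e d
          = if e = d then Dmat p σ2 γ m c e * σ2⁻¹ else 0 := by
        intro e
        have hE : Emat p σ2 G m e d = if e = d then σ2⁻¹ else 0 := by
          simp only [Emat]
          rw [dif_neg (show ¬((e:ℕ) < p ∧ (d:ℕ) < p) from fun hh => hd hh.2)]
        rw [hE, mul_ite, mul_zero]
      rw [Finset.sum_congr rfl (fun e _ => hterm e), Finset.sum_ite_eq',
        if_pos (Finset.mem_univ d)]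
      have hD : Dmat p σ2 γ m c d = 0 := by
        simp only [Dmat]
        rw [if_neg (show ¬((c:ℕ) < p ∧ (d:ℕ) < p) from fun hh => hd hh.2),
          if_neg (show ¬ c = d from fun hh => by rw [hh] at hc; omega)]
      rw [hD, zero_mul, Matrix.one_apply_ne (show c ≠ d from fun hh => by rw [hh] at hc; omega)]
  · have hterm : ∀ e : Fin m, Dmat p σ2 γ m c e * Emat p σ2 G m e d
        = if c = e then σ2 * Emat p σ2 G m e d else 0 := by
      intro e
      have hD : Dmat p σ2 γ m c e = if c = e then σ2 else 0 := by
        simp only [Dmat]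
        rw [if_neg (show ¬((c:ℕ) < p ∧ (e:ℕ) < p) from fun hh => hc hh.1)]
      rw [hD, ite_mul, zero_mul]
    rw [Finset.sum_congr rfl (fun e _ => hterm e), Finset.sum_ite_eq,
      if_pos (Finset.mem_univ c)]
    have hE : Emat p σ2 G m c d = if c = d then σ2⁻¹ else 0 := by
      simp only [Emat]
      rw [dif_neg (show ¬((c:ℕ) < p ∧ (d:ℕ) < p) from fun hh => hc hh.1)]
    rw [hE, mul_ite, mul_zero]
    by_cases hcd : c = d
    · rw [if_pos hcd, hcd, Matrix.one_apply_eq, mul_inv_cancel₀ hσ]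
    · rw [if_neg hcd, Matrix.one_apply_ne hcd]

lemma inv_eq_TET (hφ0 : φ 0 = -1) (hsym : ∀ j : ℤ, γ (-j) = γ j)
    (hYW0 : γ 0 = (∑ i ∈ Finset.Icc 1 p, φ i * γ (i : ℤ)) + σ2)
    (hYW : ∀ j : ℤ, 1 ≤ j → γ j = ∑ i ∈ Finset.Icc 1 p, φ i * γ (j - (i : ℤ)))
    (hσ : σ2 ≠ 0) {m : ℕ} (hpm : p ≤ m)
    (A : Matrix (Fin m) (Fin m) ℝ) (hA : ∀ i j : Fin m, A i j = γ |(i : ℤ) - (j : ℤ)|)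
    (G : Matrix (Fin p) (Fin p) ℝ) (hGinv : G * G⁻¹ = 1)
    (hG : ∀ i j : Fin p, G i j = γ |(i : ℤ) - (j : ℤ)|) :
    A⁻¹ = (Tmat p φ m)ᵀ * Emat p σ2 G m * Tmat p φ m := by
  have h1 : Tmat p φ m * (A * ((Tmat p φ m)ᵀ * Emat p σ2 G m)) = 1 := by
    rw [← Matrix.mul_assoc, ← Matrix.mul_assoc,
      TAT hφ0 hsym hYW0 hYW m A hA, DE_one hσ hpm G hGinv hG]
  have h2 := mul_eq_one_comm.mp h1
  have h3 : A * ((Tmat p φ m)ᵀ * Emat p σ2 G m * Tmat p φ m) = 1 := by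
    rw [← Matrix.mul_assoc]
    exact h2
  exact Matrix.inv_eq_right_inv h3

lemma TET_diag (hσ : σ2 ≠ 0) {m : ℕ} (G : Matrix (Fin p) (Fin p) ℝ)
    (a : Fin m) (ha : p ≤ (a:ℕ)) :
    ((Tmat p φ m)ᵀ * Emat p σ2 G m * Tmat p φ m) a a
      = σ2⁻¹ * ∑ k ∈ Finset.range (min (m - 1 - (a:ℕ)) p + 1), (φ k)^2 := by
  have hET : ∀ c : Fin m, (Emat p σ2 G m * Tmat p φ m) c a
      = σ2⁻¹ * Tmat p φ m c a := by
    intro c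
    rw [Matrix.mul_apply]
    have hterm : ∀ d : Fin m, Emat p σ2 G m c d * Tmat p φ m d a
        = if d = c then σ2⁻¹ * Tmat p φ m c a else 0 := by
      intro d
      by_cases hd : (d:ℕ) < p
      · have hT0 : Tmat p φ m d a = 0 := by
          rw [Tmat_top d a hd, if_neg (show ¬ d = a from fun hh => by rw [hh] at hd; omega)]
        rw [hT0, mul_zero]
        by_cases hdc : d = c
        · have hcp : (c:ℕ) < p := by rw [← hdc]; exact hd
          have hT0' : Tmat p φ m c a = 0 := by
            rw [Tmat_top c a hcp, if_neg (show ¬ c = a from fun hh => by rw [hh] at hcp; omega)]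
          rw [if_pos hdc, hT0', mul_zero]
        · rw [if_neg hdc]
      · have hE : Emat p σ2 G m c d = if c = d then σ2⁻¹ else 0 := by
          simp only [Emat]
          rw [dif_neg (show ¬((c:ℕ) < p ∧ (d:ℕ) < p) from fun hh => hd hh.2)]
        rw [hE]
        by_cases hdc : d = c
        · rw [if_pos hdc, if_pos hdc.symm, hdc]
        · rw [if_neg (show ¬ c = d from fun hh => hdc hh.symm), if_neg hdc, zero_mul]
    rw [Finset.sum_congr rfl (fun d _ => hterm d), Finset.sum_ite_eq', if_pos (Finset.mem_univ c)]
  rw [Matrix.mul_assoc, Matrix.mul_apply]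
  have hterm2 : ∀ c : Fin m, (Tmat p φ m)ᵀ a c * (Emat p σ2 G m * Tmat p φ m) c a
      = σ2⁻¹ * (fun n : ℕ => if (a:ℕ) ≤ n ∧ n ≤ (a:ℕ) + p
          then φ (n - (a:ℕ)) ^ 2 else 0) (c:ℕ) := by
    intro c
    rw [Matrix.transpose_apply, hET c]
    by_cases hc : (c:ℕ) < p
    · have hT0 : Tmat p φ m c a = 0 := by
        rw [Tmat_top c a hc, if_neg (show ¬ c = a from fun hh => by rw [hh] at hc; omega)]
      rw [hT0]
      simp only
      rw [if_neg (show ¬((a:ℕ) ≤ (c:ℕ) ∧ (c:ℕ) ≤ (a:ℕ) + p) from fun hh => by omega)]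
      ring
    · rw [Tmat_bot c a (not_lt.mp hc)]
      simp only
      by_cases h : (a:ℕ) ≤ (c:ℕ) ∧ (c:ℕ) ≤ (a:ℕ) + p
      · rw [if_pos h, if_pos h]
        ring
      · rw [if_neg h, if_neg h]
        ring
  rw [Finset.sum_congr rfl (fun c _ => hterm2 c), ← Finset.mul_sum,
    Fin.sum_univ_eq_sum_range (fun n : ℕ => if (a:ℕ) ≤ n ∧ n ≤ (a:ℕ) + p
      then φ (n - (a:ℕ)) ^ 2 else 0) m,
    shift_sum2 p (a:ℕ) m a.isLt (fun k => φ k ^ 2)]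

end Stmt10Aux



open Matrix Finset

/-- Context: AR(p) coefficients `φ`, white-noise variance `σ2`, autocovariance
sequence `γ` satisfying the Yule–Walker equations, and the autocovariance
Toeplitz matrices `Γ m`, assumed positive definite for `m ≥ 1`. -/
theorem stmt_10
    (p : ℕ) (hp : 1 ≤ p)
    (φ : ℕ → ℝ) (hφ0 : φ 0 = -1)
    (σ2 : ℝ) (hσ : 0 < σ2)
    (γ : ℤ → ℝ)
    (hsym : ∀ j : ℤ, γ (-j) = γ j)
    (hYW0 : γ 0 = (∑ i ∈ Finset.Icc 1 p, φ i * γ (i : ℤ)) + σ2)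
    (hYW : ∀ j : ℤ, 1 ≤ j → γ j = ∑ i ∈ Finset.Icc 1 p, φ i * γ (j - (i : ℤ)))
    (Γ : (m : ℕ) → Matrix (Fin m) (Fin m) ℝ)
    (hΓ : ∀ m : ℕ, ∀ i j : Fin m, Γ m i j = γ |(i : ℤ) - (j : ℤ)|)
    (hpd : ∀ m : ℕ, 1 ≤ m → (Γ m).PosDef)
    (m : ℕ) (hm : p + 1 ≤ m) (i : ℕ) (hi1 : 1 ≤ i) (hi2 : i ≤ m - p) :
    σ2 * (Γ m)⁻¹ ⟨p + i - 1, by omega⟩ ⟨p + i - 1, by omega⟩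
      = ∑ k ∈ Finset.range (min (m - p - i) p + 1), (φ k) ^ 2 := by
  have hσ' : σ2 ≠ 0 := ne_of_gt hσ
  have hpm : p ≤ m := by omega
  have hdet : IsUnit (Γ p).det :=
    isUnit_iff_ne_zero.mpr (ne_of_gt (hpd p hp).det_pos)
  have hGinv : Γ p * (Γ p)⁻¹ = 1 := Matrix.mul_nonsing_inv _ hdet
  have hinv := inv_eq_TET hφ0 hsym hYW0 hYW hσ' hpm (Γ m) (hΓ m) (Γ p) hGinv (hΓ p)
  rw [hinv]
  rw [TET_diag hσ' (Γ p) ⟨p + i - 1, by omega⟩ (show p ≤ p + i - 1 by omega)]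
  rw [← mul_assoc, mul_inv_cancel₀ hσ', one_mul]
  have hmin : m - 1 - ((⟨p + i - 1, by omega⟩ : Fin m) : ℕ) = m - p - i := by
    show m - 1 - (p + i - 1) = m - p - i
    omega
  rw [hmin]
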